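/- A function f: F_2^n → {0,1} is ε-far from odd-cycle-free if and only if every linear subspace of F_2^n of dimension n−1 contains at least ε·2^n elements of supp(f). Equivalently, for every α ∈ F_2^n, at least ε·2^n points x ∈ supp(f) satisfy α·x = 0. -/

import Mathlib

open Finset
open scoped Classical

abbrev V (n : ℕ) : Type := Fin n → ZMod 2

def dotp {n : ℕ} (α x : V n) : ZMod 2 := ∑ i, α i * x i

def IsBool {n : ℕ} (f : V n → ℝ) : Prop := ∀ x, f x = 0 ∨ f x = 1

/-- `f` is odd-cycle-free: no odd `k` and `x_1,…,x_k` in the support summing to `0`. -/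
def OCF {n : ℕ} (f : V n → ℝ) : Prop :=
  ∀ k : ℕ, Odd k → ¬ ∃ x : Fin k → V n, (∀ i, f (x i) = 1) ∧ (∑ i, x i) = 0

noncomputable def fhat {n : ℕ} (f : V n → ℝ) (α : V n) : ℝ :=
  (∑ x : V n, f x * (-1 : ℝ) ^ (dotp α x).val) / 2 ^ n

/-- `f` is `ε`-far from odd-cycle-free: every Boolean OCF function differs from `f`
on at least `ε·2^n` points. -/
def FarFromOCF {n : ℕ} (ε : ℝ) (f : V n → ℝ) : Prop :=
  ∀ g : V n → ℝ, IsBool g → OCF g →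
    ε * 2 ^ n ≤ ((Finset.univ.filter fun x => f x ≠ g x).card : ℝ)

noncomputable def dotL {n : ℕ} (α : V n) : V n →ₗ[ZMod 2] ZMod 2 :=
  ∑ i, α i • LinearMap.proj i

lemma dotL_apply {n : ℕ} (α x : V n) : dotL α x = dotp α x := by
  simp [dotL, dotp, LinearMap.sum_apply, mul_comm]

lemma zmod2_cases (a : ZMod 2) : a = 0 ∨ a = 1 := by revert a; decide

lemma dotp_single_eval {n : ℕ} (φ : V n →ₗ[ZMod 2] ZMod 2) (x : V n) :
    dotp (fun i => φ (Pi.single i 1)) x = φ x := by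
  conv_rhs => rw [pi_eq_sum_univ x]
  rw [map_sum, dotp]
  refine Finset.sum_congr rfl fun i _ => ?_
  rw [map_smul, smul_eq_mul, mul_comm]
  congr 1
  congr 1
  ext j
  simp [Pi.single_apply, eq_comm]

lemma odd_natCast_zmod2 {k : ℕ} (h : Odd k) : (k : ZMod 2) = 1 := by
  obtain ⟨m, rfl⟩ := h; push_cast
  have h2 : (2 : ZMod 2) = 0 := by decide
  rw [h2]; ring

lemma ocf_multiset {n : ℕ} {g : V n → ℝ} (hg : OCF g) (m : Multiset (V n))
    (hm : ∀ x ∈ m, g x = 1) (ho : Odd (Multiset.card m)) : m.sum ≠ 0 := by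
  intro hsum
  set l := m.toList with hl
  have hlen : l.length = Multiset.card m := Multiset.length_toList m
  refine hg l.length (hlen ▸ ho) ⟨fun i => l.get i, fun i => ?_, ?_⟩
  · exact hm _ (Multiset.mem_toList.mp (l.get_mem i))
  · simp only [List.get_eq_getElem]
    rw [Fin.sum_univ_getElem l, Multiset.sum_toList, hsum]

lemma add_self_V {n : ℕ} (x : V n) : x + x = 0 := by
  ext i; rw [Pi.add_apply, Pi.zero_apply]; generalize x i = a; revert a; decide

lemma nsmul_V {n : ℕ} (k : ℕ) (x : V n) : k • x = (k : ZMod 2) • x :=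
  (Nat.cast_smul_eq_nsmul (ZMod 2) k x).symm

lemma even_natCast_zmod2 {k : ℕ} (h : Even k) : (k : ZMod 2) = 0 := by
  rw [ZMod.natCast_eq_zero_iff]; exact h.two_dvd

lemma ocf_iff {n : ℕ} (g : V n → ℝ) : OCF g ↔ ∃ α : V n, ∀ x, g x = 1 → dotp α x = 1 := by
  constructor
  · intro hg
    by_cases hS : ∃ s0, g s0 = 1
    · obtain ⟨s0, hs0⟩ := hS
      set Sset : Set (V n) := {x | g x = 1} with hSset
      set H : Submodule (ZMod 2) (V n) := Submodule.span (ZMod 2) ((s0 + ·) '' Sset) with hH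
      have hns : s0 ∉ H := by
        intro hmem
        rw [hH, Submodule.mem_span_set] at hmem
        obtain ⟨c, hsupp, hsum⟩ := hmem
        have hmemS : ∀ v ∈ c.support, g (s0 + v) = 1 := by
          intro v hv
          obtain ⟨x, hx, hxv⟩ := hsupp hv
          have : s0 + v = x := by rw [← hxv, ← add_assoc, add_self_V, zero_add]
          rw [this]; exact hx
        have hsum' : ∑ v ∈ c.support, v = s0 := by
          rw [← hsum, Finsupp.sum]
          refine Finset.sum_congr rfl fun v hv => ?_
          rcases zmod2_cases (c v) with h0 | h1
          · exact absurd h0 (Finsupp.mem_support_iff.mp hv)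
          · rw [h1, one_smul]
        set T := c.support with hT
        set m : Multiset (V n) :=
          T.val.map (fun v => s0 + v) + (if Even T.card then {s0} else 0) with hm
        have hcard : Odd (Multiset.card m) := by
          rw [hm]
          rcases Nat.even_or_odd T.card with he | ho
          · simp [he, Nat.even_add_one, Nat.not_odd_iff_even, he, parity_simps]
          · simp [Nat.not_even_iff_odd.mpr ho, ho]
        have hmems : ∀ x ∈ m, g x = 1 := by
          intro x hx
          rw [hm, Multiset.mem_add] at hx
          rcases hx with hx | hx
          · obtain ⟨v, hv, rfl⟩ := Multiset.mem_map.mp hx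
            exact hmemS v hv
          · split_ifs at hx with h
            · rw [Multiset.mem_singleton.mp hx]; exact hs0
            · simp at hx
        have hsum0 : m.sum = 0 := by
          have hmap : (T.val.map (fun v => s0 + v)).sum = T.card • s0 + s0 := by
            rw [Multiset.sum_map_add, Multiset.map_const', Multiset.sum_replicate,
              Multiset.map_id']
            have hs : T.val.sum = s0 := by
              rw [← hsum', Finset.sum, Multiset.map_id']
            rw [hs]
            rfl
          rw [hm, Multiset.sum_add, hmap]
          rcases Nat.even_or_odd T.card with he | ho
          · rw [nsmul_V, even_natCast_zmod2 he, zero_smul, zero_add, if_pos he]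
            simp [add_self_V]
          · rw [nsmul_V, odd_natCast_zmod2 ho, one_smul, add_self_V,
              if_neg (Nat.not_even_iff_odd.mpr ho)]
            simp
        exact ocf_multiset hg m hmems hcard hsum0
      obtain ⟨φ, hφ0, hφmap⟩ := Submodule.exists_dual_map_eq_bot_of_notMem hns inferInstance
      have hφker : ∀ y ∈ H, φ y = 0 := by
        intro y hy
        have : φ y ∈ H.map φ := Submodule.mem_map_of_mem hy
        rw [hφmap] at this
        exact this
      refine ⟨fun i => φ (Pi.single i 1), fun x hx => ?_⟩
      rw [dotp_single_eval]
      have hx' : s0 + x ∈ H := Submodule.subset_span ⟨x, hx, rfl⟩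
      have hs1 : φ s0 = 1 := (zmod2_cases _).resolve_left hφ0
      have hxx : s0 + (s0 + x) = x := by rw [← add_assoc, add_self_V, zero_add]
      rw [← hxx, map_add, hs1, hφker _ hx', add_zero]
    · exact ⟨0, fun x hx => absurd ⟨x, hx⟩ hS⟩
  · rintro ⟨α, hα⟩ k hk ⟨x, hx1, hx0⟩
    have h1 : dotL α (∑ i, x i) = 0 := by rw [hx0, map_zero]
    rw [map_sum] at h1
    have h2 : ∀ i, dotL α (x i) = 1 := fun i => by rw [dotL_apply]; exact hα _ (hx1 i)
    simp only [h2, Finset.sum_const, Finset.card_univ, Fintype.card_fin, nsmul_eq_mul,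
      mul_one] at h1
    rw [odd_natCast_zmod2 hk] at h1
    exact one_ne_zero h1

lemma dotp_zero {n : ℕ} (x : V n) : dotp 0 x = 0 := by simp [dotp]

lemma far_iff_alpha {n : ℕ} (f : V n → ℝ) (hf : IsBool f) (ε : ℝ) :
    FarFromOCF ε f ↔
      ∀ α : V n,
        ε * 2 ^ n ≤ ((Finset.univ.filter fun x => f x = 1 ∧ dotp α x = 0).card : ℝ) := by
  constructor
  · intro hfar α
    set g : V n → ℝ := fun x => if f x = 1 ∧ dotp α x = 1 then (1 : ℝ) else 0 with hg
    have hgb : IsBool g := by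
      intro x; rw [hg]; dsimp only; split
      · exact Or.inr rfl
      · exact Or.inl rfl
    have hgo : OCF g := by
      rw [ocf_iff]
      refine ⟨α, fun x hx => ?_⟩
      rw [hg] at hx; dsimp only at hx
      by_contra hc
      rw [if_neg (fun h => hc h.2)] at hx
      exact zero_ne_one hx
    have heq : (Finset.univ.filter fun x => f x ≠ g x) =
        (Finset.univ.filter fun x => f x = 1 ∧ dotp α x = 0) := by
      apply Finset.filter_congr
      intro x _
      rcases hf x with h0 | h1
      · have hgx : g x = 0 := by
          rw [hg]; dsimp only; rw [if_neg]
          rintro ⟨h, -⟩; rw [h0] at h; exact zero_ne_one h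
        simp [h0, hgx]
      · rcases zmod2_cases (dotp α x) with hd | hd
        · have hgx : g x = 0 := by
            rw [hg]; dsimp only; rw [if_neg]
            rintro ⟨-, h⟩; rw [hd] at h; exact zero_ne_one h
          simp [h1, hgx, hd]
        · have hgx : g x = 1 := by rw [hg]; dsimp only; rw [if_pos ⟨h1, hd⟩]
          simp [h1, hgx, hd]
    have := hfar g hgb hgo
    rwa [heq] at this
  · intro h g hgb hgo
    obtain ⟨α, hα⟩ := ocf_iff g |>.mp hgo
    refine le_trans (h α) ?_
    have hsub : (Finset.univ.filter fun x => f x = 1 ∧ dotp α x = 0) ⊆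
        (Finset.univ.filter fun x => f x ≠ g x) := by
      intro x hx
      rw [Finset.mem_filter] at hx ⊢
      obtain ⟨-, hfx, hdx⟩ := hx
      refine ⟨Finset.mem_univ x, ?_⟩
      rcases hgb x with h0 | h1
      · rw [hfx, h0]; exact one_ne_zero
      · have := hα x h1
        rw [hdx] at this
        exact absurd this zero_ne_one
    exact_mod_cast Nat.cast_le.mpr (Finset.card_le_card hsub)

lemma finrank_V (n : ℕ) : Module.finrank (ZMod 2) (V n) = n := by
  rw [Module.finrank_pi, Fintype.card_fin]

lemma ker_dotL {n : ℕ} {α : V n} (hα : α ≠ 0) :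
    Module.finrank (ZMod 2) (LinearMap.ker (dotL α)) = n - 1 := by
  obtain ⟨j, hj⟩ := Function.ne_iff.mp hα
  have hj1 : α j = 1 := (zmod2_cases _).resolve_left hj
  have h1 : dotL α (Pi.single j 1) = 1 := by
    rw [dotL_apply, dotp]
    rw [Finset.sum_eq_single j]
    · simp [hj1]
    · intro i _ hi; simp [Pi.single_apply, hi]
    · intro h; exact absurd (Finset.mem_univ j) h
  have hsurj : Function.Surjective (dotL α) := by
    intro c
    rcases zmod2_cases c with rfl | rfl
    · exact ⟨0, map_zero _⟩
    · exact ⟨Pi.single j 1, h1⟩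
  have hrn := LinearMap.finrank_range_add_finrank_ker (dotL α)
  rw [LinearMap.range_eq_top.mpr hsurj, finrank_top, Module.finrank_self, finrank_V] at hrn
  have hn : 0 < n := j.pos
  omega

lemma exists_alpha_of_H {n : ℕ} (H : Submodule (ZMod 2) (V n))
    (hH : Module.finrank (ZMod 2) H = n - 1) :
    ∃ α : V n, ∀ x, (x ∈ H ↔ dotp α x = 0) := by
  rcases Nat.eq_zero_or_pos n with rfl | hn
  · refine ⟨0, fun x => ?_⟩
    have hx0 : x = 0 := Subsingleton.elim x 0
    rw [dotp_zero, hx0]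
    exact iff_of_true H.zero_mem rfl
  · have hlt : H < ⊤ := by
      rw [lt_top_iff_ne_top]
      intro hc
      rw [hc, finrank_top, finrank_V] at hH
      omega
    obtain ⟨φ, hφ0, hφmap⟩ := Submodule.exists_dual_map_eq_bot_of_lt_top hlt inferInstance
    have hle : H ≤ LinearMap.ker φ := by
      intro y hy
      have : φ y ∈ H.map φ := Submodule.mem_map_of_mem hy
      rw [hφmap] at this
      exact this
    obtain ⟨x0, hx0⟩ := Function.ne_iff.mp (fun h => hφ0 (LinearMap.ext fun x => by
      simpa using congrFun h x))
    set α : V n := fun i => φ (Pi.single i 1) with hα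
    have hαne : α ≠ 0 := by
      intro hc
      apply hx0
      have := dotp_single_eval φ x0
      rw [← hα, hc, dotp_zero] at this
      simp [← this]
    have hker : H = LinearMap.ker (dotL α) := by
      have hle' : H ≤ LinearMap.ker (dotL α) := by
        intro y hy
        rw [LinearMap.mem_ker, dotL_apply, dotp_single_eval]
        exact hle hy
      exact (Submodule.eq_of_le_of_finrank_eq hle' (by rw [hH, ker_dotL hαne])).symm ▸ rfl
    refine ⟨α, fun x => ?_⟩
    rw [hker, LinearMap.mem_ker, dotL_apply]

theorem stmt2 {n : ℕ} (f : V n → ℝ) (hf : IsBool f) (ε : ℝ) :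
    (FarFromOCF ε f ↔
      ∀ H : Submodule (ZMod 2) (V n), Module.finrank (ZMod 2) H = n - 1 →
        ε * 2 ^ n ≤ ((Finset.univ.filter fun x => f x = 1 ∧ x ∈ H).card : ℝ)) ∧
    (FarFromOCF ε f ↔
      ∀ α : V n,
        ε * 2 ^ n ≤ ((Finset.univ.filter fun x => f x = 1 ∧ dotp α x = 0).card : ℝ)) := by
  have key := far_iff_alpha f hf ε
  refine ⟨?_, key⟩
  rw [key]
  constructor
  · intro hα H hH
    obtain ⟨α, hiff⟩ := exists_alpha_of_H H hH
    have hset : (Finset.univ.filter fun x => f x = 1 ∧ x ∈ H) =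
        (Finset.univ.filter fun x => f x = 1 ∧ dotp α x = 0) := by
      apply Finset.filter_congr
      intro x _
      exact and_congr_right fun _ => hiff x
    rw [hset]
    exact hα α
  · intro hH α
    by_cases hα : α = 0
    · subst hα
      rcases Nat.eq_zero_or_pos n with rfl | hn
      · have h := hH ⊤ (by rw [finrank_top, finrank_V])
        have hset : (Finset.univ.filter fun x => f x = 1 ∧ x ∈ (⊤ : Submodule (ZMod 2) (V 0)))
            = (Finset.univ.filter fun x => f x = 1 ∧ dotp 0 x = 0) := by
          apply Finset.filter_congr
          intro x _
          exact and_congr_right fun _ => iff_of_true Submodule.mem_top (dotp_zero x)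
        rwa [hset] at h
      · set α' : V n := Pi.single ⟨0, hn⟩ 1 with hα'
        have hα'ne : α' ≠ 0 := by
          intro hc
          have : α' ⟨0, hn⟩ = 0 := by rw [hc]; rfl
          rw [hα', Pi.single_eq_same] at this
          exact one_ne_zero this
        have h := hH _ (ker_dotL hα'ne)
        refine le_trans h ?_
        have hsub : (Finset.univ.filter fun x => f x = 1 ∧ x ∈ LinearMap.ker (dotL α')) ⊆
            (Finset.univ.filter fun x => f x = 1 ∧ dotp 0 x = 0) := by
          intro x hx
          rw [Finset.mem_filter] at hx ⊢
          exact ⟨hx.1, hx.2.1, dotp_zero x⟩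
        exact_mod_cast Nat.cast_le.mpr (Finset.card_le_card hsub)
    · have h := hH _ (ker_dotL hα)
      have hset : (Finset.univ.filter fun x => f x = 1 ∧ x ∈ LinearMap.ker (dotL α)) =
          (Finset.univ.filter fun x => f x = 1 ∧ dotp α x = 0) := by
        apply Finset.filter_congr
        intro x _
        rw [LinearMap.mem_ker, dotL_apply]
      rwa [hset] at h
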